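/- arXiv:1801.09481 — 3 statements merged into one kernel-verified Lean document; each statement's English description precedes it below -/
import Mathlib

section
/- Let C be a binary linear code of length N and Ω the set of erasure patterns covering at least one nonzero codeword. If ω lies in the boundary ∂Ω, i.e., ω ∈ Ω and there exists ω' ∉ Ω with d_H(ω,ω') = 1, then ω covers exactly one nonzero codeword of C. -/
open scoped Classical
open Finset

noncomputable section

/-- Erasure patterns and codewords: vectors in 𝔽₂^N. -/
abbrev Pattern (N : ℕ) := Fin N → ZMod 2

/-- Hamming weight. -/
def wH {N : ℕ} (x : Pattern N) : ℕ := hammingNorm x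

/-- `ω` covers `x` if the support of `x` is contained in the support of `ω`. -/
def covers {N : ℕ} (ω x : Pattern N) : Prop := ∀ i, x i ≠ 0 → ω i ≠ 0

/-- Erasure patterns covering at least one nonzero codeword. -/
def errBEC {N : ℕ} (C : Submodule (ZMod 2) (Pattern N)) : Finset (Pattern N) :=
  univ.filter (fun ω => ∃ x ∈ C, x ≠ 0 ∧ covers ω x)

/-- The boundary ∂Ω: elements of Ω having a Hamming-distance-1 neighbour outside Ω. -/
def bdry {N : ℕ} (C : Submodule (ZMod 2) (Pattern N)) : Finset (Pattern N) :=
  (errBEC C).filter (fun ω => ∃ ω', ω' ∉ errBEC C ∧ hammingDist ω ω' = 1)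

theorem boundary_covers_unique_codeword (N : ℕ) (C : Submodule (ZMod 2) (Pattern N))
    (ω : Pattern N) (hω : ω ∈ bdry C) :
    ∃! x : Pattern N, x ∈ C ∧ x ≠ 0 ∧ covers ω x := by
  classical
  simp only [bdry, Finset.mem_filter] at hω
  obtain ⟨hωΩ, ω', hω'Ω, hdist⟩ := hω
  have hex : ∃ x ∈ C, x ≠ 0 ∧ covers ω x := by
    simpa [errBEC] using hωΩ
  obtain ⟨x, hxC, hx0, hxcov⟩ := hex
  have hω'Ω' : ∀ y ∈ C, y ≠ 0 → ¬ covers ω' y := by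
    intro y hyC hy0 hyc
    apply hω'Ω
    simp only [errBEC, Finset.mem_filter, Finset.mem_univ, true_and]
    exact ⟨y, hyC, hy0, hyc⟩
  rw [hammingDist, Finset.card_eq_one] at hdist
  obtain ⟨i₀, hi₀⟩ := hdist
  have heq : ∀ j, j ≠ i₀ → ω j = ω' j := by
    intro j hj
    by_contra h
    have : j ∈ ({i₀} : Finset (Fin N)) := hi₀ ▸ (by simp [h])
    exact hj (Finset.mem_singleton.mp this)
  have key : ∀ y ∈ C, y ≠ 0 → covers ω y → y i₀ ≠ 0 := by
    intro y hyC hy0 hyc h0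
    apply hω'Ω' y hyC hy0
    intro j hj
    rcases eq_or_ne j i₀ with rfl | hji
    · exact absurd h0 hj
    · rw [← heq j hji]; exact hyc j hj
  refine ⟨x, ⟨hxC, hx0, hxcov⟩, ?_⟩
  rintro y ⟨hyC, hy0, hyc⟩
  by_contra hne'
  have hsum0 : y + x ≠ 0 := by
    intro h
    apply hne'
    funext i
    have : y i + x i = 0 := congrFun h i
    revert this
    have : ∀ a b : ZMod 2, a + b = 0 → a = b := by decide
    exact this _ _
  have hsumcov : covers ω (y + x) := by
    intro j hj
    rcases eq_or_ne (y j) 0 with h | h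
    · apply hxcov j
      intro hx
      exact hj (by simp [Pi.add_apply, h, hx])
    · exact hyc j h
  have h1 : (y + x) i₀ ≠ 0 := key _ (C.add_mem hyC hxC) hsum0 hsumcov
  have hy₀ : y i₀ ≠ 0 := key y hyC hy0 hyc
  have hx₀ : x i₀ ≠ 0 := key x hxC hx0 hxcov
  apply h1
  have : ∀ a b : ZMod 2, a ≠ 0 → b ≠ 0 → a + b = 0 := by decide
  exact this _ _ hy₀ hx₀

end
end

section
/- Let C be a binary linear code of length N with minimum distance d_min, and Ω the set of erasure patterns covering at least one nonzero codeword. For every boundary point ω ∈ ∂Ω, letting x(ω) denote the unique nonzero codeword covered by ω, we have h_Ω(ω) ≥ w_H(x(ω)); in particular h_Ω(ω) ≥ d_min for all ω ∈ ∂Ω. -/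
open scoped Classical
open Finset

noncomputable section

/-- h_Ω(ω): number of Hamming-distance-1 neighbours of ω outside Ω (zero for ω ∉ Ω). -/
def hOm {N : ℕ} (C : Submodule (ZMod 2) (Pattern N)) (ω : Pattern N) : ℕ :=
  if ω ∈ errBEC C then
    (univ.filter (fun ω' : Pattern N => ω' ∉ errBEC C ∧ hammingDist ω ω' = 1)).card
  else 0

lemma zmod2_ne_zero {a : ZMod 2} (h : a ≠ 0) : a = 1 := by
  revert h; revert a; decide

theorem boundary_hOm_lower_bound (N dmin : ℕ) (C : Submodule (ZMod 2) (Pattern N))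
    (hdmin : IsLeast {w : ℕ | ∃ x ∈ C, x ≠ 0 ∧ wH x = w} dmin) :
    ∀ ω ∈ bdry C,
      (∀ x : Pattern N, x ∈ C → x ≠ 0 → covers ω x → wH x ≤ hOm C ω) ∧
      dmin ≤ hOm C ω := by
  intro ω hω
  rw [bdry, mem_filter] at hω
  obtain ⟨hΩ, ω', hω', hd⟩ := hω
  -- the unique coordinate where ω and ω' differ
  obtain ⟨j, hj⟩ : ∃ j, ∀ i, ω i ≠ ω' i ↔ i = j := by
    rw [hammingDist, Finset.card_eq_one] at hd
    obtain ⟨j, hj⟩ := hd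
    refine ⟨j, fun i => ?_⟩
    have := Finset.ext_iff.mp hj i
    simpa using this
  -- every nonzero codeword covered by ω is nonzero at j
  have hkey : ∀ z ∈ C, z ≠ 0 → covers ω z → z j ≠ 0 := by
    intro z hzC hz0 hzc hzj
    apply hω'
    rw [errBEC, mem_filter]
    refine ⟨mem_univ _, z, hzC, hz0, fun i hi => ?_⟩
    have hij : i ≠ j := fun h => hi (by rw [h]; exact hzj)
    have : ω i = ω' i := by
      by_contra h; exact hij ((hj i).mp h)
    rw [← this]; exact hzc i hi
  -- zeroing ω at a support coordinate of a covered codeword leaves Ω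
  have hflip : ∀ x ∈ C, x ≠ 0 → covers ω x → ∀ i, x i ≠ 0 →
      Function.update ω i 0 ∉ errBEC C := by
    intro x hxC hx0 hxc i hxi hmem
    rw [errBEC, mem_filter] at hmem
    obtain ⟨-, y, hyC, hy0, hyc⟩ := hmem
    have hyi : y i = 0 := by
      by_contra h
      have := hyc i h
      simp [Function.update_self] at this
    have hycω : covers ω y := by
      intro k hk
      have := hyc k hk
      rcases eq_or_ne k i with rfl | hne
      · exact absurd hyi hk
      · rwa [Function.update_of_ne hne] at this
    -- z = x + y is a nonzero codeword covered by ω with z j = 0 : contradiction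
    have hzC : x + y ∈ C := C.add_mem hxC hyC
    have hz0 : x + y ≠ 0 := by
      intro h
      have : (x + y) i = 0 := by rw [h]; rfl
      simp [hyi] at this
      exact hxi this
    have hzc : covers ω (x + y) := by
      intro k hk
      by_contra hωk
      have hxk : x k = 0 := by
        by_contra h; exact (hxc k h) hωk
      have hyk : y k = 0 := by
        by_contra h; exact (hycω k h) hωk
      apply hk; simp [Pi.add_apply, hxk, hyk]
    have hzj := hkey _ hzC hz0 hzc
    have hxj := zmod2_ne_zero (hkey _ hxC hx0 hxc)
    have hyj := zmod2_ne_zero (hkey _ hyC hy0 hycω)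
    apply hzj
    show x j + y j = 0
    rw [hxj, hyj]; decide
  -- main counting bound
  have hmain : ∀ x : Pattern N, x ∈ C → x ≠ 0 → covers ω x → wH x ≤ hOm C ω := by
    intro x hxC hx0 hxc
    rw [hOm, if_pos hΩ, wH, hammingNorm]
    apply Finset.card_le_card_of_injOn (fun i => Function.update ω i 0)
    · intro i hi
      rw [mem_coe, mem_filter] at hi ⊢
      have hxi : x i ≠ 0 := hi.2
      have hωi : ω i ≠ 0 := hxc i hxi
      refine ⟨mem_univ _, hflip x hxC hx0 hxc i hxi, ?_⟩
      rw [hammingDist, Finset.card_eq_one]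
      refine ⟨i, Finset.ext fun k => ?_⟩
      simp only [mem_filter, mem_univ, true_and, mem_singleton]
      constructor
      · intro h
        by_contra hne
        rw [Function.update_of_ne hne] at h
        exact h rfl
      · rintro rfl
        rw [Function.update_self]
        exact hωi
    · intro i hi i' hi' h
      by_contra hne
      have := congrFun h i
      simp only [Function.update_self, Function.update_of_ne hne] at this
      rw [mem_coe, mem_filter] at hi
      exact (hxc i hi.2) this.symm
  refine ⟨hmain, ?_⟩
  rw [errBEC, mem_filter] at hΩ
  obtain ⟨-, x, hxC, hx0, hxc⟩ := hΩ
  have h1 : dmin ≤ wH x := hdmin.2 ⟨x, hxC, hx0, rfl⟩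
  exact h1.trans (hmain x hxC hx0 hxc)

end
end

section
/- Let C be a binary linear code of length N and Ω the set of erasure patterns covering at least one nonzero codeword. For every integer 1 ≤ W ≤ N, define Γ_W = {ω ∈ ∂Ω : w_H(x(ω)) ≥ W}. Then for every 0 < ε < 1: ∑_{ω ∈ ∂Ω \ Γ_W} √(h_Ω(ω))·μ_ε(ω) ≤ ∑_{w=1}^{W} √w·A(w)·ε^w ≤ √W·A(W,ε). -/
open scoped Classical
open Finset

noncomputable section

/-- Weight distribution A(w) of the code. -/
def Aw {N : ℕ} (C : Submodule (ZMod 2) (Pattern N)) (w : ℕ) : ℕ :=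
  (univ.filter (fun x : Pattern N => x ∈ C ∧ wH x = w)).card

/-- A(W, z) = ∑_{w=1}^W A(w) z^w. -/
def AW {N : ℕ} (C : Submodule (ZMod 2) (Pattern N)) (W : ℕ) (z : ℝ) : ℝ :=
  ∑ w ∈ Finset.Icc 1 W, (Aw C w : ℝ) * z ^ w

/-- Γ_W: boundary points whose (unique) covered nonzero codeword has weight at least W. -/
def GammaW {N : ℕ} (C : Submodule (ZMod 2) (Pattern N)) (W : ℕ) : Finset (Pattern N) :=
  (bdry C).filter (fun ω => ∃ x ∈ C, x ≠ 0 ∧ covers ω x ∧ W ≤ wH x)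

-- measure lemma
lemma measure_covers {N : ℕ} (x : Pattern N) (ε : ℝ) :
    ∑ ω ∈ univ.filter (fun ω : Pattern N => covers ω x),
      ε ^ wH ω * (1 - ε) ^ (N - wH ω) = ε ^ wH x := by
  classical
  set g : Fin N → ZMod 2 → ℝ := fun i a =>
    (if x i ≠ 0 ∧ a = 0 then 0 else 1) * (if a ≠ 0 then ε else 1 - ε) with hg
  have huniv : (univ : Finset (ZMod 2)) = {0, 1} := by decide
  have hsum : ∀ i, ∑ a : ZMod 2, g i a = if x i ≠ 0 then ε else 1 := by
    intro i
    rw [huniv, Finset.sum_pair (by decide : (0 : ZMod 2) ≠ 1)]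
    by_cases h : x i = 0 <;> simp [hg, h] <;> ring
  have hprod : ∀ ω : Pattern N,
      ∏ i, g i (ω i) = (if covers ω x then (1:ℝ) else 0) *
        (ε ^ wH ω * (1 - ε) ^ (N - wH ω)) := by
    intro ω
    rw [hg]
    simp only [Finset.prod_mul_distrib]
    congr 1
    · by_cases h : covers ω x
      · rw [if_pos h, Finset.prod_eq_one]
        intro i _
        rw [if_neg]
        rintro ⟨h1, h2⟩
        exact h i h1 h2
      · rw [if_neg h]
        simp only [covers, not_forall] at h
        obtain ⟨i, h1, h2⟩ := h
        push_neg at h2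
        apply Finset.prod_eq_zero (Finset.mem_univ i)
        rw [if_pos ⟨h1, h2⟩]
    · rw [Finset.prod_ite (fun _ => ε) (fun _ => 1 - ε), Finset.prod_const, Finset.prod_const]
      congr 1
      congr 1
      have := Finset.card_filter_add_card_filter_not
          (s := (univ : Finset (Fin N))) (p := fun i => ω i ≠ 0)
      simp only [Finset.card_univ, Fintype.card_fin] at this
      have hw : wH ω = #(filter (fun i => ω i ≠ 0) univ) := rfl
      omega
  calc ∑ ω ∈ univ.filter (fun ω : Pattern N => covers ω x),
        ε ^ wH ω * (1 - ε) ^ (N - wH ω)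
      = ∑ ω : Pattern N, (if covers ω x then (1:ℝ) else 0) *
          (ε ^ wH ω * (1 - ε) ^ (N - wH ω)) := by
        rw [Finset.sum_filter]
        apply Finset.sum_congr rfl
        intro ω _
        by_cases h : covers ω x <;> simp [h]
    _ = ∑ ω : Pattern N, ∏ i, g i (ω i) := by
        apply Finset.sum_congr rfl; intro ω _; rw [hprod]
    _ = ∏ i, ∑ a : ZMod 2, g i a := (Fintype.prod_sum g).symm
    _ = ∏ i, (if x i ≠ 0 then ε else 1) := by
        apply Finset.prod_congr rfl; intro i _; rw [hsum]
    _ = ε ^ wH x := by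
        rw [Finset.prod_ite (fun _ => ε) (fun _ => (1:ℝ)), Finset.prod_const,
          Finset.prod_const, one_pow, mul_one]
        rfl

lemma zmod2_eq : ∀ {u v w : ZMod 2}, u ≠ v → u ≠ w → v = w := by decide

lemma hOm_le {N : ℕ} (C : Submodule (ZMod 2) (Pattern N)) {ω x : Pattern N}
    (hx : x ∈ C) (hx0 : x ≠ 0) (hc : covers ω x) : hOm C ω ≤ wH x := by
  classical
  rw [hOm]
  split
  · -- injection into support of x
    obtain ⟨i0, hi0⟩ : ∃ i, x i ≠ 0 := by
      by_contra h
      push_neg at h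
      exact hx0 (funext fun i => h i)
    set S := univ.filter (fun ω' : Pattern N => ω' ∉ errBEC C ∧ hammingDist ω ω' = 1) with hS
    have hwx : wH x = (univ.filter (fun i => x i ≠ 0)).card := rfl
    rw [hwx]
    set f : Pattern N → Fin N := fun ω' =>
      if h : ∃ i, (univ.filter (fun j => ω j ≠ ω' j)) = {i} then h.choose else i0 with hf
    have key : ∀ ω' ∈ S, (univ.filter (fun j => ω j ≠ ω' j)) = {f ω'} ∧ x (f ω') ≠ 0 := by
      intro ω' hω'
      simp only [hS, Finset.mem_filter, Finset.mem_univ, true_and] at hω'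
      obtain ⟨hout, hd⟩ := hω'
      have hd1 : (univ.filter (fun j => ω j ≠ ω' j)).card = 1 := hd
      rw [Finset.card_eq_one] at hd1
      have hex : ∃ i, (univ.filter (fun j => ω j ≠ ω' j)) = {i} := hd1
      have hfe : (univ.filter (fun j => ω j ≠ ω' j)) = {f ω'} := by
        rw [hf]; simp only [dif_pos hex]; exact hex.choose_spec
      refine ⟨hfe, ?_⟩
      -- if x (f ω') = 0 then ω' covers x, contradiction
      by_contra hxi
      apply hout
      simp only [errBEC, Finset.mem_filter, Finset.mem_univ, true_and]
      refine ⟨x, hx, hx0, fun j hj => ?_⟩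
      have hji : j ≠ f ω' := fun h => hj (h ▸ hxi)
      have : ω j = ω' j := by
        by_contra hne
        have : j ∈ ({f ω'} : Finset (Fin N)) := hfe ▸ (Finset.mem_filter.2 ⟨Finset.mem_univ j, hne⟩)
        exact hji (Finset.mem_singleton.1 this)
      exact this ▸ hc j hj
    apply Finset.card_le_card_of_injOn f
    · intro ω' hω'
      exact Finset.mem_filter.2 ⟨Finset.mem_univ _, (key ω' hω').2⟩
    · intro a ha b hb hab
      obtain ⟨hfa, _⟩ := key a ha
      obtain ⟨hfb, _⟩ := key b hb
      funext j
      by_cases hj : j = f a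
      · have h1 : ω j ≠ a j := by
          have : f a ∈ ({f a} : Finset (Fin N)) := Finset.mem_singleton_self _
          rw [← hfa, Finset.mem_filter] at this
          rw [hj]; exact this.2
        have h2 : ω j ≠ b j := by
          have : f b ∈ ({f b} : Finset (Fin N)) := Finset.mem_singleton_self _
          rw [← hfb, Finset.mem_filter] at this
          rw [hj, hab]; exact this.2
        exact zmod2_eq h1 h2
      · have h1 : ω j = a j := by
          by_contra hne
          exact hj (Finset.mem_singleton.1 (hfa ▸ Finset.mem_filter.2 ⟨Finset.mem_univ j, hne⟩))
        have h2 : ω j = b j := by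
          by_contra hne
          have : j ∈ ({f b} : Finset (Fin N)) :=
            hfb ▸ Finset.mem_filter.2 ⟨Finset.mem_univ j, hne⟩
          rw [Finset.mem_singleton] at this
          rw [this, hab] at hj
          exact hj rfl
        rw [← h1, ← h2]
  · exact Nat.zero_le _

theorem small_weight_boundary_bound (N : ℕ) (C : Submodule (ZMod 2) (Pattern N))
    (W : ℕ) (hW1 : 1 ≤ W) (hWN : W ≤ N) (ε : ℝ) (hε : 0 < ε) (hε1 : ε < 1) :
    (∑ ω ∈ bdry C \ GammaW C W,
        Real.sqrt (hOm C ω) * (ε ^ wH ω * (1 - ε) ^ (N - wH ω)))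
      ≤ ∑ w ∈ Finset.Icc 1 W, Real.sqrt w * (Aw C w : ℝ) * ε ^ w ∧
    (∑ w ∈ Finset.Icc 1 W, Real.sqrt w * (Aw C w : ℝ) * ε ^ w)
      ≤ Real.sqrt W * AW C W ε := by

  classical
  have hε0 : (0:ℝ) ≤ ε := hε.le
  have h1ε : (0:ℝ) ≤ 1 - ε := by linarith
  have hμ0 : ∀ ω : Pattern N, 0 ≤ ε ^ wH ω * (1 - ε) ^ (N - wH ω) := fun ω =>
    mul_nonneg (pow_nonneg hε0 _) (pow_nonneg h1ε _)
  set S := bdry C \ GammaW C W with hSdef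
  set f : Pattern N → Pattern N := fun ω =>
    if h : ∃ x, x ∈ C ∧ x ≠ 0 ∧ covers ω x then h.choose else 0 with hf
  have hfprop : ∀ ω ∈ S, f ω ∈ C ∧ f ω ≠ 0 ∧ covers ω (f ω) ∧ 1 ≤ wH (f ω) ∧ wH (f ω) ≤ W := by
    intro ω hω
    rw [hSdef, Finset.mem_sdiff] at hω
    obtain ⟨hb, hg⟩ := hω
    have hΩ : ω ∈ errBEC C := (Finset.mem_filter.1 hb).1
    have hex : ∃ x, x ∈ C ∧ x ≠ 0 ∧ covers ω x := by
      simpa [errBEC] using (Finset.mem_filter.1 hΩ).2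
    have hspec := hex.choose_spec
    have hfω : f ω = hex.choose := by rw [hf]; simp only [dif_pos hex]
    rw [hfω]
    obtain ⟨h1, h2, h3⟩ := hspec
    have hw1 : 1 ≤ wH hex.choose := by
      rcases Nat.eq_zero_or_pos (wH hex.choose) with h | h
      · exact absurd ((hammingNorm_eq_zero).1 h) h2
      · exact h
    have hwW : wH hex.choose ≤ W := by
      by_contra hlt
      push_neg at hlt
      apply hg
      rw [GammaW, Finset.mem_filter]
      exact ⟨hb, hex.choose, h1, h2, h3, hlt.le⟩
    exact ⟨h1, h2, h3, hw1, hwW⟩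
  set D := univ.filter (fun x : Pattern N => x ∈ C ∧ 1 ≤ wH x ∧ wH x ≤ W) with hD
  constructor
  · calc ∑ ω ∈ S, Real.sqrt (hOm C ω) * (ε ^ wH ω * (1 - ε) ^ (N - wH ω))
        = ∑ x ∈ S.image f, ∑ ω ∈ S.filter (fun ω => f ω = x),
            Real.sqrt (hOm C ω) * (ε ^ wH ω * (1 - ε) ^ (N - wH ω)) :=
          (Finset.sum_fiberwise_of_maps_to (fun ω hω => Finset.mem_image_of_mem f hω) _).symm
      _ ≤ ∑ x ∈ S.image f, Real.sqrt (wH x) * ε ^ wH x := by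
          apply Finset.sum_le_sum
          intro x hx
          obtain ⟨ω0, hω0, hfω0⟩ := Finset.mem_image.1 hx
          obtain ⟨hxC, hx0, -, -, -⟩ := hfω0 ▸ hfprop ω0 hω0
          calc ∑ ω ∈ S.filter (fun ω => f ω = x),
                Real.sqrt (hOm C ω) * (ε ^ wH ω * (1 - ε) ^ (N - wH ω))
              ≤ ∑ ω ∈ S.filter (fun ω => f ω = x),
                Real.sqrt (wH x) * (ε ^ wH ω * (1 - ε) ^ (N - wH ω)) := by
                apply Finset.sum_le_sum
                intro ω hω
                rw [Finset.mem_filter] at hω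
                obtain ⟨hωS, hfx⟩ := hω
                have hcov : covers ω x := hfx ▸ (hfprop ω hωS).2.2.1
                have hle : hOm C ω ≤ wH x := hOm_le C hxC hx0 hcov
                exact mul_le_mul_of_nonneg_right
                  (Real.sqrt_le_sqrt (by exact_mod_cast hle)) (hμ0 ω)
            _ = Real.sqrt (wH x) * ∑ ω ∈ S.filter (fun ω => f ω = x),
                  (ε ^ wH ω * (1 - ε) ^ (N - wH ω)) := by rw [Finset.mul_sum]
            _ ≤ Real.sqrt (wH x) * ε ^ wH x := by
                apply mul_le_mul_of_nonneg_left _ (Real.sqrt_nonneg _)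
                rw [← measure_covers (N := N) x ε]
                apply Finset.sum_le_sum_of_subset_of_nonneg
                · intro ω hω
                  rw [Finset.mem_filter] at hω ⊢
                  refine ⟨Finset.mem_univ _, ?_⟩
                  exact hω.2 ▸ (hfprop ω hω.1).2.2.1
                · intro ω _ _; exact hμ0 ω
      _ ≤ ∑ x ∈ D, Real.sqrt (wH x) * ε ^ wH x := by
          apply Finset.sum_le_sum_of_subset_of_nonneg
          · intro x hx
            obtain ⟨ω0, hω0, hfω0⟩ := Finset.mem_image.1 hx
            obtain ⟨h1, -, -, h4, h5⟩ := hfω0 ▸ hfprop ω0 hω0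
            exact Finset.mem_filter.2 ⟨Finset.mem_univ _, h1, h4, h5⟩
          · intro x _ _
            exact mul_nonneg (Real.sqrt_nonneg _) (pow_nonneg hε0 _)
      _ = ∑ w ∈ Finset.Icc 1 W, ∑ x ∈ D.filter (fun x => wH x = w),
            Real.sqrt (wH x) * ε ^ wH x := by
          refine (Finset.sum_fiberwise_of_maps_to ?_ _).symm
          intro x hx
          rw [hD, Finset.mem_filter] at hx
          exact Finset.mem_Icc.2 ⟨hx.2.2.1, hx.2.2.2⟩
      _ = ∑ w ∈ Finset.Icc 1 W, Real.sqrt w * (Aw C w : ℝ) * ε ^ w := by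
          apply Finset.sum_congr rfl
          intro w hw
          rw [Finset.mem_Icc] at hw
          have hset : D.filter (fun x => wH x = w)
              = univ.filter (fun x : Pattern N => x ∈ C ∧ wH x = w) := by
            rw [hD, Finset.filter_filter]
            apply Finset.filter_congr
            intro x _
            constructor
            · rintro ⟨⟨h1, -, -⟩, h2⟩; exact ⟨h1, h2⟩
            · rintro ⟨h1, h2⟩; exact ⟨⟨h1, h2 ▸ hw.1, h2 ▸ hw.2⟩, h2⟩
          rw [hset]
          rw [Finset.sum_congr rfl (fun x hx => by
            rw [(Finset.mem_filter.1 hx).2.2]), Finset.sum_const, Aw]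
          push_cast
          ring
  · rw [AW, Finset.mul_sum]
    apply Finset.sum_le_sum
    intro w hw
    rw [Finset.mem_Icc] at hw
    have : Real.sqrt w ≤ Real.sqrt W := Real.sqrt_le_sqrt (by exact_mod_cast hw.2)
    have hA : (0:ℝ) ≤ (Aw C w : ℝ) * ε ^ w :=
      mul_nonneg (Nat.cast_nonneg _) (pow_nonneg hε0 _)
    calc Real.sqrt w * (Aw C w : ℝ) * ε ^ w
        = Real.sqrt w * ((Aw C w : ℝ) * ε ^ w) := by ring
      _ ≤ Real.sqrt W * ((Aw C w : ℝ) * ε ^ w) := mul_le_mul_of_nonneg_right this hA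

end
end
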